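/- Let E be a directed graph, K a field, and v a vertex such that T_E(v) is a cycle without exits (i.e., T_E(v) consists exactly of the vertices of a single cycle c based at v and c has no exits). Then the corner vL_K(E)v is isomorphic as a K-algebra to the Laurent polynomial ring K[x, x⁻¹]. -/

import Mathlib

/-- A directed graph: vertices, edges, source and target (range) maps. -/
structure DGraph where
  V : Type
  E : Type
  src : E → V
  tgt : E → V

namespace DGraph

/-- There is a (possibly empty) directed path from `u` to `w`. -/
def Reaches (G : DGraph) (u w : G.V) : Prop :=
  Relation.ReflTransGen (fun a b => ∃ e : G.E, G.src e = a ∧ G.tgt e = b) u w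

/-- A nonempty list of composable edges, closed, not passing through any vertex twice. -/
def IsCycle (G : DGraph) (p : List G.E) : Prop :=
  p ≠ [] ∧ List.Chain' (fun e f => G.tgt e = G.src f) p ∧
    p.getLast?.map G.tgt = p.head?.map G.src ∧ (p.map G.src).Nodup

/-- The preorder on cycles: `c ≥ c'` iff some vertex of `c` reaches some vertex of `c'`. -/
def CycleGe (G : DGraph) (c c' : List G.E) : Prop :=
  ∃ u w : G.V, u ∈ c.map G.src ∧ w ∈ c'.map G.src ∧ G.Reaches u w

/-- Two cycles are the same cycle iff one is a rotation of the other. -/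
def IsRotation (G : DGraph) (c c' : List G.E) : Prop :=
  ∃ n : ℕ, c' = c.rotate n

/-- An infinite path, as a coherent sequence of edges. -/
def IsInfPath (G : DGraph) (p : ℕ → G.E) : Prop :=
  ∀ n : ℕ, G.tgt (p n) = G.src (p (n + 1))

/-- A rational infinite path: `g g g ⋯` for a (finite, nonempty, closed) path `g`. -/
def IsRational (G : DGraph) (q : ℕ → G.E) : Prop :=
  ∃ (g : List G.E) (hg : g ≠ []),
    List.Chain' (fun e f => G.tgt e = G.src f) g ∧
    g.getLast?.map G.tgt = g.head?.map G.src ∧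
    ∀ k : ℕ, q k = g.get ⟨k % g.length, Nat.mod_lt _ (List.length_pos_iff.mpr hg)⟩

/-- Tail equivalence of infinite paths. -/
def TailEquiv (G : DGraph) (p q : ℕ → G.E) : Prop :=
  ∃ m n : ℕ, ∀ k : ℕ, p (m + k) = q (n + k)

end DGraph

/-- Generators of the Leavitt path algebra: vertices, edges (real), ghost edges. -/
inductive LPAGen (G : DGraph) : Type
  | vertex : G.V → LPAGen G
  | edge : G.E → LPAGen G
  | ghost : G.E → LPAGen G

open Classical in
/-- The defining relations of the Leavitt path algebra `L_K(E)`: the vertices are pairwise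
orthogonal idempotents, `s(e)e = e = e r(e)`, `r(e)e* = e* = e* s(e)`, the (CK-1)
relations `e* f = δ_{e,f} r(e)`, and the (CK-2) relations `v = ∑_{s(e)=v} e e*` for every
regular vertex `v`. -/
inductive LPARel (K : Type) [Field K] (G : DGraph) :
    FreeAlgebra K (LPAGen G) → FreeAlgebra K (LPAGen G) → Prop
  | vtx (u v : G.V) :
      LPARel K G (FreeAlgebra.ι K (LPAGen.vertex u) * FreeAlgebra.ι K (LPAGen.vertex v))
        (if u = v then FreeAlgebra.ι K (LPAGen.vertex u) else 0)
  | src_edge (e : G.E) :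
      LPARel K G (FreeAlgebra.ι K (LPAGen.vertex (G.src e)) * FreeAlgebra.ι K (LPAGen.edge e))
        (FreeAlgebra.ι K (LPAGen.edge e))
  | edge_tgt (e : G.E) :
      LPARel K G (FreeAlgebra.ι K (LPAGen.edge e) * FreeAlgebra.ι K (LPAGen.vertex (G.tgt e)))
        (FreeAlgebra.ι K (LPAGen.edge e))
  | tgt_ghost (e : G.E) :
      LPARel K G (FreeAlgebra.ι K (LPAGen.vertex (G.tgt e)) * FreeAlgebra.ι K (LPAGen.ghost e))
        (FreeAlgebra.ι K (LPAGen.ghost e))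
  | ghost_src (e : G.E) :
      LPARel K G (FreeAlgebra.ι K (LPAGen.ghost e) * FreeAlgebra.ι K (LPAGen.vertex (G.src e)))
        (FreeAlgebra.ι K (LPAGen.ghost e))
  | ck1 (e f : G.E) :
      LPARel K G (FreeAlgebra.ι K (LPAGen.ghost e) * FreeAlgebra.ι K (LPAGen.edge f))
        (if e = f then FreeAlgebra.ι K (LPAGen.vertex (G.tgt e)) else 0)
  | ck2 (v : G.V) (hfin : {e : G.E | G.src e = v}.Finite)
      (hne : {e : G.E | G.src e = v}.Nonempty) :
      LPARel K G (FreeAlgebra.ι K (LPAGen.vertex v))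
        (∑ e ∈ hfin.toFinset,
          FreeAlgebra.ι K (LPAGen.edge e) * FreeAlgebra.ι K (LPAGen.ghost e))

/-- The Leavitt path algebra of the graph `G` over the field `K`. -/
abbrev LPA (K : Type) [Field K] (G : DGraph) := RingQuot (LPARel K G)

/-- The image of a vertex `v` in the Leavitt path algebra. -/
noncomputable def lpaVtx (K : Type) [Field K] (G : DGraph) (v : G.V) : LPA K G :=
  RingQuot.mkRingHom (LPARel K G) (FreeAlgebra.ι K (LPAGen.vertex v))

lemma lpaVtx_idem (K : Type) [Field K] (G : DGraph) (v : G.V) :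
    lpaVtx K G v * lpaVtx K G v = lpaVtx K G v := by
  have h := RingQuot.mkRingHom_rel (LPARel.vtx (K := K) (G := G) v v)
  rw [if_pos rfl, map_mul] at h
  exact h

/-- The corner `vLv` of the Leavitt path algebra, as a non-unital `K`-subalgebra. -/
noncomputable def lpaCorner (K : Type) [Field K] (G : DGraph) (v : G.V) :
    NonUnitalSubalgebra K (LPA K G) where
  carrier := {x : LPA K G | lpaVtx K G v * x * lpaVtx K G v = x}
  zero_mem' := by simp
  add_mem' := by
    intro a b ha hb
    simp only [Set.mem_setOf_eq] at *
    rw [mul_add, add_mul, ha, hb]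
  mul_mem' := by
    intro a b ha hb
    simp only [Set.mem_setOf_eq] at *
    have hv := lpaVtx_idem K G v
    have ha1 : lpaVtx K G v * a = a := by
      conv_lhs => rw [← ha]
      rw [← mul_assoc, ← mul_assoc, hv, ha]
    have hb1 : b * lpaVtx K G v = b := by
      conv_lhs => rw [← hb]
      rw [mul_assoc, hv, hb]
    rw [← mul_assoc, ha1, mul_assoc, hb1]
  smul_mem' := by
    intro r x hx
    simp only [Set.mem_setOf_eq] at *
    rw [mul_smul_comm, smul_mul_assoc, hx]


namespace Stmt14

open scoped Classical

variable (K : Type) [Field K] (G : DGraph)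

/-- Image of an edge in the LPA. -/
noncomputable def lE (e : G.E) : LPA K G :=
  RingQuot.mkRingHom (LPARel K G) (FreeAlgebra.ι K (LPAGen.edge e))

/-- Image of a ghost edge in the LPA. -/
noncomputable def lG (e : G.E) : LPA K G :=
  RingQuot.mkRingHom (LPARel K G) (FreeAlgebra.ι K (LPAGen.ghost e))

lemma hVV (u w : G.V) :
    lpaVtx K G u * lpaVtx K G w = if u = w then lpaVtx K G u else 0 := by
  have h := RingQuot.mkRingHom_rel (LPARel.vtx (K := K) (G := G) u w)
  by_cases huw : u = w
  · rw [if_pos huw] at h ⊢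
    rw [lpaVtx, lpaVtx, ← map_mul]; exact h
  · rw [if_neg huw] at h ⊢
    rw [lpaVtx, lpaVtx, ← map_mul, h, map_zero]

lemma hVE (u : G.V) (e : G.E) :
    lpaVtx K G u * lE K G e = if u = G.src e then lE K G e else 0 := by
  have h := RingQuot.mkRingHom_rel (LPARel.src_edge (K := K) (G := G) e)
  rw [map_mul] at h
  by_cases huw : u = G.src e
  · rw [if_pos huw, huw]; exact h
  · rw [if_neg huw]
    have h2 : lpaVtx K G (G.src e) * lE K G e = lE K G e := h
    rw [← h2, ← mul_assoc, hVV, if_neg huw, zero_mul]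

lemma hEV (u : G.V) (e : G.E) :
    lE K G e * lpaVtx K G u = if G.tgt e = u then lE K G e else 0 := by
  have h := RingQuot.mkRingHom_rel (LPARel.edge_tgt (K := K) (G := G) e)
  rw [map_mul] at h
  by_cases huw : G.tgt e = u
  · rw [if_pos huw, ← huw]; exact h
  · rw [if_neg huw]
    have h2 : lE K G e * lpaVtx K G (G.tgt e) = lE K G e := h
    rw [← h2, mul_assoc, hVV, if_neg huw, mul_zero]

lemma hVG (u : G.V) (e : G.E) :
    lpaVtx K G u * lG K G e = if u = G.tgt e then lG K G e else 0 := by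
  have h := RingQuot.mkRingHom_rel (LPARel.tgt_ghost (K := K) (G := G) e)
  rw [map_mul] at h
  by_cases huw : u = G.tgt e
  · rw [if_pos huw, huw]; exact h
  · rw [if_neg huw]
    have h2 : lpaVtx K G (G.tgt e) * lG K G e = lG K G e := h
    rw [← h2, ← mul_assoc, hVV, if_neg huw, zero_mul]

lemma hGV (u : G.V) (e : G.E) :
    lG K G e * lpaVtx K G u = if G.src e = u then lG K G e else 0 := by
  have h := RingQuot.mkRingHom_rel (LPARel.ghost_src (K := K) (G := G) e)
  rw [map_mul] at h
  by_cases huw : G.src e = u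
  · rw [if_pos huw, ← huw]; exact h
  · rw [if_neg huw]
    have h2 : lG K G e * lpaVtx K G (G.src e) = lG K G e := h
    rw [← h2, mul_assoc, hVV, if_neg huw, mul_zero]

lemma hGE (e f : G.E) :
    lG K G e * lE K G f = if e = f then lpaVtx K G (G.tgt e) else 0 := by
  have h := RingQuot.mkRingHom_rel (LPARel.ck1 (K := K) (G := G) e f)
  by_cases hef : e = f
  · rw [if_pos hef] at h ⊢
    rw [lG, lE, lpaVtx, ← map_mul]; exact h
  · rw [if_neg hef] at h ⊢
    rw [lG, lE, ← map_mul, h, map_zero]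

lemma ck2_single (w : G.V) (e0 : G.E) (h : ∀ e : G.E, G.src e = w ↔ e = e0) :
    lpaVtx K G w = lE K G e0 * lG K G e0 := by
  have hset : {e : G.E | G.src e = w} = {e0} := Set.ext h
  have hfin : ({e : G.E | G.src e = w}).Finite := hset ▸ Set.finite_singleton e0
  have hne : ({e : G.E | G.src e = w}).Nonempty := ⟨e0, (h e0).mpr rfl⟩
  have hrel := RingQuot.mkRingHom_rel (LPARel.ck2 (K := K) (G := G) w hfin hne)
  have htf : hfin.toFinset = {e0} := by
    ext e; simp [hset]
  rw [htf, Finset.sum_singleton, map_mul] at hrel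
  exact hrel


section Cycle

variable (v : G.V) (c : List G.E)

/-- The `i`-th edge along the infinite repetition of the cycle. -/
def Ed (hc : G.IsCycle c) (i : ℕ) : G.E :=
  c.get ⟨i % c.length, Nat.mod_lt _ (List.length_pos_iff.mpr hc.1)⟩

/-- The `i`-th vertex along the infinite repetition of the cycle. -/
def pos (hc : G.IsCycle c) (i : ℕ) : G.V := G.src (Ed G c hc i)

variable (hc : G.IsCycle c)

lemma Ed_per (i : ℕ) : Ed G c hc (i + c.length) = Ed G c hc i := by
  simp only [Ed, Nat.add_mod_right]

lemma Ed_mod (i : ℕ) : Ed G c hc (i % c.length) = Ed G c hc i := by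
  simp only [Ed, Nat.mod_mod]

lemma pos_per (i : ℕ) : pos G c hc (i + c.length) = pos G c hc i := by
  simp only [pos, Ed_per]

lemma pos_mod (i : ℕ) : pos G c hc (i % c.length) = pos G c hc i := by
  simp only [pos, Ed_mod]

lemma succ_mod_key (n i : ℕ) : (i + 1) % n = (i % n + 1) % n := by
  rw [Nat.add_mod i 1 n, Nat.add_mod (i % n) 1 n, Nat.mod_mod]

lemma pos_zero (hbase : c.head?.map G.src = some v) : pos G c hc 0 = v := by
  have hne := hc.1
  rw [List.head?_eq_head hne] at hbase
  simp only [Option.map_some, Option.some.injEq] at hbase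
  rw [pos, Ed, ← hbase]
  congr 1
  simp only [Nat.zero_mod, List.get_eq_getElem]
  exact List.getElem_zero _

lemma tgt_Ed (i : ℕ) : G.tgt (Ed G c hc i) = pos G c hc (i + 1) := by
  have hne := hc.1
  have hn : 0 < c.length := List.length_pos_iff.mpr hne
  set n := c.length with hnn
  have ha : i % n < n := Nat.mod_lt _ hn
  have key : (i + 1) % n = (i % n + 1) % n := succ_mod_key n i
  by_cases hend : i % n + 1 < n
  · have hchain := (List.isChain_iff_getElem.mp hc.2.1) (i % n) (by omega)
    have hmod : (i + 1) % n = i % n + 1 := by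
      rw [key]; exact Nat.mod_eq_of_lt hend
    rw [pos, Ed, Ed]
    simp only [← hnn, hmod]
    simp only [List.get_eq_getElem] at hchain ⊢
    exact hchain
  · have hlast : i % n = n - 1 := by omega
    have hmod : (i + 1) % n = 0 := by
      rw [key, hlast, Nat.sub_add_cancel hn, Nat.mod_self]
    have hcl := hc.2.2.1
    rw [List.getLast?_eq_getLast_of_ne_nil hne, List.head?_eq_head hne] at hcl
    simp only [Option.map_some, Option.some.injEq] at hcl
    rw [pos, Ed, Ed]
    simp only [← hnn, hmod, hlast]
    have h1 : c.getLast hne = c.get ⟨n - 1, by omega⟩ := by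
      rw [List.getLast_eq_getElem]; simp [← hnn]
    have h2 : c.head hne = c.get ⟨0, by omega⟩ := by
      simp only [List.get_eq_getElem]
      exact (List.getElem_zero _).symm
    rw [h1, h2] at hcl
    simp only [List.get_eq_getElem] at hcl ⊢
    exact hcl

lemma pos_mem (i : ℕ) : pos G c hc i ∈ c.map G.src := by
  rw [pos, Ed]
  exact List.mem_map_of_mem (List.get_mem _ _)

lemma Ed_unique (hnoexit : ∀ e f : G.E, G.src e = G.src f → G.src e ∈ c.map G.src → e = f)
    (i : ℕ) (e : G.E) (h : G.src e = pos G c hc i) : e = Ed G c hc i := by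
  exact hnoexit e (Ed G c hc i) h (by rw [h]; exact pos_mem G c hc i)

lemma pos_inj {i j : ℕ} (h : pos G c hc i = pos G c hc j) : i % c.length = j % c.length := by
  have hnd := hc.2.2.2
  have hn : 0 < c.length := List.length_pos_iff.mpr hc.1
  have hlen : (c.map G.src).length = c.length := List.length_map _
  have hi : i % c.length < (c.map G.src).length := by rw [hlen]; exact Nat.mod_lt _ hn
  have hj : j % c.length < (c.map G.src).length := by rw [hlen]; exact Nat.mod_lt _ hn
  have hget : (c.map G.src).get ⟨i % c.length, hi⟩ = (c.map G.src).get ⟨j % c.length, hj⟩ := by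
    simp only [List.get_eq_getElem, List.getElem_map]
    unfold pos Ed at h
    simp only [List.get_eq_getElem] at h
    exact h
  have := (hnd.get_inj_iff).mp hget
  exact congrArg Fin.val this

lemma EdEG (hnoexit : ∀ e f : G.E, G.src e = G.src f → G.src e ∈ c.map G.src → e = f)
    (i : ℕ) : lE K G (Ed G c hc i) * lG K G (Ed G c hc i) = lpaVtx K G (pos G c hc i) := by
  refine (ck2_single K G (pos G c hc i) (Ed G c hc i) fun e =>
    ⟨Ed_unique G c hc hnoexit i e, ?_⟩).symm
  rintro rfl; rfl

lemma GEEd (i : ℕ) :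
    lG K G (Ed G c hc i) * lE K G (Ed G c hc i) = lpaVtx K G (pos G c hc (i + 1)) := by
  rw [hGE, if_pos rfl, tgt_Ed]

end Cycle


section Seg

variable (c : List G.E) (hc : G.IsCycle c)

/-- Product of `k` consecutive edges of the cycle starting at index `a`,
with the vertex idempotent at the start when `k = 0`. -/
noncomputable def seg : ℕ → ℕ → LPA K G
  | a, 0 => lpaVtx K G (pos G c hc a)
  | a, k+1 => lE K G (Ed G c hc a) * seg (a+1) k

/-- Product of `k` consecutive ghost edges of the cycle, reversed, starting at index `a`. -/
noncomputable def gseg : ℕ → ℕ → LPA K G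
  | a, 0 => lpaVtx K G (pos G c hc a)
  | a, k+1 => gseg (a+1) k * lG K G (Ed G c hc a)

lemma src_Ed (a : ℕ) : G.src (Ed G c hc a) = pos G c hc a := rfl

lemma seg_zero (a : ℕ) : seg K G c hc a 0 = lpaVtx K G (pos G c hc a) := rfl
lemma seg_succ (a k : ℕ) :
    seg K G c hc a (k+1) = lE K G (Ed G c hc a) * seg K G c hc (a+1) k := rfl
lemma gseg_zero (a : ℕ) : gseg K G c hc a 0 = lpaVtx K G (pos G c hc a) := rfl
lemma gseg_succ (a k : ℕ) :
    gseg K G c hc a (k+1) = gseg K G c hc (a+1) k * lG K G (Ed G c hc a) := rfl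

lemma seg_succ' (a k : ℕ) :
    seg K G c hc a (k+1) = seg K G c hc a k * lE K G (Ed G c hc (a+k)) := by
  induction k generalizing a with
  | zero =>
    show seg K G c hc a 1 = seg K G c hc a 0 * lE K G (Ed G c hc a)
    rw [seg_succ, seg_zero, seg_zero, hEV, if_pos (tgt_Ed G c hc a),
      hVE, if_pos (src_Ed G c hc a).symm]
  | succ k ih =>
    rw [seg_succ, ih (a+1), seg_succ, mul_assoc]
    have : a + 1 + k = a + (k + 1) := by omega
    rw [this]

lemma gseg_succ' (a k : ℕ) :
    gseg K G c hc a (k+1) = lG K G (Ed G c hc (a+k)) * gseg K G c hc a k := by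
  induction k generalizing a with
  | zero =>
    show gseg K G c hc a 1 = lG K G (Ed G c hc a) * gseg K G c hc a 0
    rw [gseg_succ, gseg_zero, gseg_zero, hVG,
      if_pos (tgt_Ed G c hc a).symm, hGV, if_pos (src_Ed G c hc a)]
  | succ k ih =>
    rw [gseg_succ, ih (a+1), gseg_succ, mul_assoc]
    have : a + 1 + k = a + (k + 1) := by omega
    rw [this]

lemma seg_headV (a k : ℕ) :
    lpaVtx K G (pos G c hc a) * seg K G c hc a k = seg K G c hc a k := by
  cases k with
  | zero => rw [seg_zero, hVV, if_pos rfl]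
  | succ k => rw [seg_succ, ← mul_assoc, hVE, if_pos (src_Ed G c hc a).symm]

lemma seg_tailV (a k : ℕ) :
    seg K G c hc a k * lpaVtx K G (pos G c hc (a + k)) = seg K G c hc a k := by
  cases k with
  | zero => rw [Nat.add_zero, seg_zero, hVV, if_pos rfl]
  | succ k => rw [seg_succ', mul_assoc, hEV, if_pos]; exact tgt_Ed G c hc (a + k)

lemma gseg_headV (a k : ℕ) :
    lpaVtx K G (pos G c hc (a + k)) * gseg K G c hc a k = gseg K G c hc a k := by
  cases k with
  | zero => rw [Nat.add_zero, gseg_zero, hVV, if_pos rfl]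
  | succ k =>
    rw [gseg_succ', ← mul_assoc, hVG, if_pos]
    exact (tgt_Ed G c hc (a + k)).symm

lemma gseg_tailV (a k : ℕ) :
    gseg K G c hc a k * lpaVtx K G (pos G c hc a) = gseg K G c hc a k := by
  cases k with
  | zero => rw [gseg_zero, hVV, if_pos rfl]
  | succ k => rw [gseg_succ, mul_assoc, hGV, if_pos (src_Ed G c hc a)]

lemma Ed_shift {j : ℕ} (hj : c.length ∣ j) (a : ℕ) : Ed G c hc (a + j) = Ed G c hc a := by
  obtain ⟨m, rfl⟩ := hj
  rw [Ed, Ed]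
  congr 1
  simp [Nat.add_mul_mod_self_left]

lemma pos_shift {j : ℕ} (hj : c.length ∣ j) (a : ℕ) : pos G c hc (a + j) = pos G c hc a := by
  rw [pos, pos, Ed_shift G c hc hj]

lemma seg_shift {j : ℕ} (hj : c.length ∣ j) (a k : ℕ) :
    seg K G c hc (a + j) k = seg K G c hc a k := by
  induction k generalizing a with
  | zero => rw [seg_zero, seg_zero, pos_shift G c hc hj]
  | succ k ih =>
    rw [seg_succ, seg_succ, Ed_shift G c hc hj]
    have : a + j + 1 = (a + 1) + j := by omega
    rw [this, ih]

lemma gseg_shift {j : ℕ} (hj : c.length ∣ j) (a k : ℕ) :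
    gseg K G c hc (a + j) k = gseg K G c hc a k := by
  induction k generalizing a with
  | zero => rw [gseg_zero, gseg_zero, pos_shift G c hc hj]
  | succ k ih =>
    rw [gseg_succ, gseg_succ, Ed_shift G c hc hj]
    have : a + j + 1 = (a + 1) + j := by omega
    rw [this, ih]

lemma seg_concat (a j k : ℕ) :
    seg K G c hc a j * seg K G c hc (a + j) k = seg K G c hc a (j + k) := by
  induction j generalizing a with
  | zero => rw [seg_zero, Nat.add_zero, Nat.zero_add, seg_headV]
  | succ j ih =>
    have h1 : a + (j + 1) = (a + 1) + j := by omega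
    have h2 : j + 1 + k = (j + k) + 1 := by omega
    rw [h2, seg_succ, seg_succ, mul_assoc, h1, ih (a+1)]

lemma gseg_concat (a j k : ℕ) :
    gseg K G c hc (a + j) k * gseg K G c hc a j = gseg K G c hc a (j + k) := by
  induction j generalizing a with
  | zero => rw [gseg_zero, Nat.add_zero, Nat.zero_add, gseg_tailV]
  | succ j ih =>
    have h1 : a + (j + 1) = (a + 1) + j := by omega
    have h2 : j + 1 + k = (j + k) + 1 := by omega
    rw [h2, gseg_succ, gseg_succ, ← mul_assoc, h1, ih (a+1)]

lemma gseg_mul_seg (a k : ℕ) :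
    gseg K G c hc a k * seg K G c hc a k = lpaVtx K G (pos G c hc (a + k)) := by
  induction k generalizing a with
  | zero => rw [Nat.add_zero, gseg_zero, seg_zero, hVV, if_pos rfl]
  | succ k ih =>
    rw [gseg_succ, seg_succ, mul_assoc, ← mul_assoc (lG K G (Ed G c hc a)), GEEd,
      seg_headV, ih (a+1)]
    have : a + 1 + k = a + (k + 1) := by omega
    rw [this]

lemma seg_mul_gseg
    (hnoexit : ∀ e f : G.E, G.src e = G.src f → G.src e ∈ c.map G.src → e = f) (a k : ℕ) :
    seg K G c hc a k * gseg K G c hc a k = lpaVtx K G (pos G c hc a) := by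
  induction k generalizing a with
  | zero => rw [gseg_zero, seg_zero, hVV, if_pos rfl]
  | succ k ih =>
    rw [gseg_succ', seg_succ', mul_assoc, ← mul_assoc (lE K G (Ed G c hc (a + k))),
      EdEG K G c hc hnoexit, ← mul_assoc, seg_tailV, ih a]

lemma gseg_mul_seg_le (a j k : ℕ) :
    gseg K G c hc a j * seg K G c hc a (j + k) = seg K G c hc (a + j) k := by
  rw [← seg_concat, ← mul_assoc, gseg_mul_seg, seg_headV]

lemma gseg_mul_seg_ge (a j k : ℕ) :
    gseg K G c hc a (j + k) * seg K G c hc a j = gseg K G c hc (a + j) k := by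
  rw [← gseg_concat, mul_assoc, gseg_mul_seg, gseg_tailV]

lemma seg_mul_gseg_le
    (hnoexit : ∀ e f : G.E, G.src e = G.src f → G.src e ∈ c.map G.src → e = f)
    {d : ℕ} (hd : c.length ∣ d) (a k : ℕ) :
    seg K G c hc a k * gseg K G c hc a (k + d) = gseg K G c hc a d := by
  induction k generalizing a with
  | zero =>
    rw [Nat.zero_add, seg_zero]
    have h3 : pos G c hc a = pos G c hc (a + d) := (pos_shift G c hc hd a).symm
    rw [h3, gseg_headV]
  | succ k ih =>
    have h1 : k + 1 + d = (k + d) + 1 := by omega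
    rw [h1, seg_succ', gseg_succ', mul_assoc, ← mul_assoc (lE K G (Ed G c hc (a + k)))]
    have h2 : a + (k + d) = (a + k) + d := by omega
    rw [h2, Ed_shift G c hc hd, EdEG K G c hc hnoexit, ← mul_assoc, seg_tailV, ih a]

lemma seg_mul_gseg_ge
    (hnoexit : ∀ e f : G.E, G.src e = G.src f → G.src e ∈ c.map G.src → e = f)
    {d : ℕ} (hd : c.length ∣ d) (a k : ℕ) :
    seg K G c hc a (k + d) * gseg K G c hc a k = seg K G c hc a d := by
  induction k generalizing a with
  | zero =>
    rw [Nat.zero_add, gseg_zero]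
    have h3 : pos G c hc a = pos G c hc (a + d) := (pos_shift G c hc hd a).symm
    rw [h3, seg_tailV]
  | succ k ih =>
    have h1 : k + 1 + d = (k + d) + 1 := by omega
    rw [h1, seg_succ', gseg_succ', mul_assoc,
      ← mul_assoc (lE K G (Ed G c hc (a + (k + d))))]
    have h2 : a + (k + d) = (a + k) + d := by omega
    rw [h2, Ed_shift G c hc hd, EdEG K G c hc hnoexit, ← mul_assoc]
    have h3 : pos G c hc (a + k) = pos G c hc (a + (k + d)) := by
      rw [h2]; exact (pos_shift G c hc hd (a+k)).symm
    rw [h3, seg_tailV, ih a]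

end Seg


section Z

variable (c : List G.E) (hc : G.IsCycle c)

/-- The image of `x^m` in the Leavitt path algebra: the `m`-th power of the cycle. -/
noncomputable def Zel (m : ℤ) : LPA K G :=
  if 0 ≤ m then seg K G c hc 0 (m.toNat * c.length)
  else gseg K G c hc 0 ((-m).toNat * c.length)

lemma Zel_nonneg {m : ℤ} (h : 0 ≤ m) :
    Zel K G c hc m = seg K G c hc 0 (m.toNat * c.length) := if_pos h

lemma Zel_neg {m : ℤ} (h : ¬ 0 ≤ m) :
    Zel K G c hc m = gseg K G c hc 0 ((-m).toNat * c.length) := if_neg h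

lemma Zel_zero : Zel K G c hc 0 = lpaVtx K G (pos G c hc 0) := by
  rw [Zel_nonneg K G c hc le_rfl]
  norm_num
  rw [seg_zero]

lemma Zel_headV (m : ℤ) :
    lpaVtx K G (pos G c hc 0) * Zel K G c hc m = Zel K G c hc m := by
  by_cases h : 0 ≤ m
  · rw [Zel_nonneg K G c hc h, seg_headV]
  · rw [Zel_neg K G c hc h]
    have hg := gseg_headV K G c hc 0 ((-m).toNat * c.length)
    rwa [pos_shift G c hc (dvd_mul_left _ _) 0] at hg

lemma Zel_tailV (m : ℤ) :
    Zel K G c hc m * lpaVtx K G (pos G c hc 0) = Zel K G c hc m := by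
  by_cases h : 0 ≤ m
  · rw [Zel_nonneg K G c hc h]
    have hs := seg_tailV K G c hc 0 (m.toNat * c.length)
    rwa [pos_shift G c hc (dvd_mul_left _ _) 0] at hs
  · rw [Zel_neg K G c hc h, gseg_tailV]

lemma Zel_mul
    (hnoexit : ∀ e f : G.E, G.src e = G.src f → G.src e ∈ c.map G.src → e = f)
    (m₁ m₂ : ℤ) :
    Zel K G c hc m₁ * Zel K G c hc m₂ = Zel K G c hc (m₁ + m₂) := by
  by_cases h1 : 0 ≤ m₁ <;> by_cases h2 : 0 ≤ m₂
  · rw [Zel_nonneg K G c hc h1, Zel_nonneg K G c hc h2,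
      Zel_nonneg K G c hc (by omega : (0:ℤ) ≤ m₁ + m₂)]
    have h4 : (m₁ + m₂).toNat = m₁.toNat + m₂.toNat := by omega
    rw [h4, add_mul, ← seg_concat,
      seg_shift K G c hc (dvd_mul_left c.length m₁.toNat) 0]
  · by_cases h3 : 0 ≤ m₁ + m₂
    · rw [Zel_nonneg K G c hc h1, Zel_neg K G c hc h2, Zel_nonneg K G c hc h3]
      have h4 : m₁.toNat = (-m₂).toNat + (m₁ + m₂).toNat := by omega
      rw [h4, add_mul, seg_mul_gseg_ge K G c hc hnoexit (dvd_mul_left _ _)]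
    · rw [Zel_nonneg K G c hc h1, Zel_neg K G c hc h2, Zel_neg K G c hc h3]
      have h4 : (-m₂).toNat = m₁.toNat + (-(m₁ + m₂)).toNat := by omega
      rw [h4, add_mul, seg_mul_gseg_le K G c hc hnoexit (dvd_mul_left _ _)]
  · by_cases h3 : 0 ≤ m₁ + m₂
    · rw [Zel_neg K G c hc h1, Zel_nonneg K G c hc h2, Zel_nonneg K G c hc h3]
      have h4 : m₂.toNat = (-m₁).toNat + (m₁ + m₂).toNat := by omega
      rw [h4, add_mul, gseg_mul_seg_le,
        seg_shift K G c hc (dvd_mul_left c.length (-m₁).toNat) 0]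
    · rw [Zel_neg K G c hc h1, Zel_nonneg K G c hc h2, Zel_neg K G c hc h3]
      have h4 : (-m₁).toNat = m₂.toNat + (-(m₁ + m₂)).toNat := by omega
      rw [h4, add_mul, gseg_mul_seg_ge,
        gseg_shift K G c hc (dvd_mul_left c.length m₂.toNat) 0]
  · rw [Zel_neg K G c hc h1, Zel_neg K G c hc h2,
      Zel_neg K G c hc (by omega : ¬ (0:ℤ) ≤ m₁ + m₂)]
    rw [← gseg_shift K G c hc (dvd_mul_left c.length (-m₂).toNat) 0
      ((-m₁).toNat * c.length), gseg_concat]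
    have h4 : (-(m₁ + m₂)).toNat = (-m₂).toNat + (-m₁).toNat := by omega
    rw [h4, add_mul]

lemma Zel_memCorner (v : G.V) (hbase : c.head?.map G.src = some v) (m : ℤ) :
    Zel K G c hc m ∈ lpaCorner K G v := by
  have h0 : lpaVtx K G v = lpaVtx K G (pos G c hc 0) := by
    rw [pos_zero G v c hc hbase]
  show lpaVtx K G v * Zel K G c hc m * lpaVtx K G v = Zel K G c hc m
  rw [h0, Zel_headV, Zel_tailV]

end Z


section Span

/-- The source of a path, with default vertex `w` for the empty path. -/
def headSrc : List G.E → G.V → G.V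
  | [], w => w
  | e :: _, _ => G.src e

/-- `Comp p w` says `p` is a composable chain of edges ending at `w`. -/
def Comp : List G.E → G.V → Prop
  | [], _ => True
  | e :: p, w => G.tgt e = headSrc G p w ∧ Comp p w

/-- Product of the edges of a path, with the target vertex idempotent at the end. -/
noncomputable def pathP : List G.E → G.V → LPA K G
  | [], w => lpaVtx K G w
  | e :: p, w => lE K G e * pathP p w

/-- Product of the ghost edges of a path, reversed, with the vertex at the left end. -/
noncomputable def ghostP : List G.E → G.V → LPA K G
  | [], w => lpaVtx K G w
  | e :: p, w => ghostP p w * lG K G e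

lemma headSrc_nil (w : G.V) : headSrc G [] w = w := rfl
lemma headSrc_cons (e : G.E) (p : List G.E) (w : G.V) :
    headSrc G (e :: p) w = G.src e := rfl
lemma pathP_nil (w : G.V) : pathP K G [] w = lpaVtx K G w := rfl
lemma pathP_cons (e : G.E) (p : List G.E) (w : G.V) :
    pathP K G (e :: p) w = lE K G e * pathP K G p w := rfl
lemma ghostP_nil (w : G.V) : ghostP K G [] w = lpaVtx K G w := rfl
lemma ghostP_cons (e : G.E) (p : List G.E) (w : G.V) :
    ghostP K G (e :: p) w = ghostP K G p w * lG K G e := rfl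

lemma vtx_mul_pathP (x : G.V) (p : List G.E) (w : G.V) :
    lpaVtx K G x * pathP K G p w
      = if x = headSrc G p w then pathP K G p w else 0 := by
  cases p with
  | nil =>
    rw [pathP_nil, headSrc_nil, hVV]
    by_cases h : x = w
    · rw [if_pos h, if_pos h, h]
    · rw [if_neg h, if_neg h]
  | cons e p =>
    rw [headSrc_cons, pathP_cons, ← mul_assoc, hVE]
    by_cases h : x = G.src e
    · rw [if_pos h, if_pos h]
    · rw [if_neg h, if_neg h, zero_mul]

lemma ghostP_mul_vtx (q : List G.E) (w x : G.V) :
    ghostP K G q w * lpaVtx K G x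
      = if headSrc G q w = x then ghostP K G q w else 0 := by
  cases q with
  | nil => rw [ghostP_nil, headSrc_nil]; exact hVV K G w x
  | cons e q =>
    rw [headSrc_cons, ghostP_cons, mul_assoc, hGV]
    by_cases h : G.src e = x
    · rw [if_pos h, if_pos h]
    · rw [if_neg h, if_neg h, mul_zero]

lemma headSrc_append {r : List G.E} {u w : G.V} (h : headSrc G r u = w) (p : List G.E) :
    headSrc G (p ++ r) u = headSrc G p w := by
  cases p with
  | nil => exact h
  | cons f p => rfl

lemma Comp_append {p r : List G.E} {w u : G.V}
    (hp : Comp G p w) (hr : Comp G r u) (h : headSrc G r u = w) :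
    Comp G (p ++ r) u := by
  induction p with
  | nil => exact hr
  | cons e p ih =>
    exact ⟨hp.1.trans (headSrc_append G h p).symm, ih hp.2⟩

lemma pathP_append {p r : List G.E} {w u : G.V}
    (hp : Comp G p w) (h : headSrc G r u = w) :
    pathP K G p w * pathP K G r u = pathP K G (p ++ r) u := by
  induction p with
  | nil =>
    rw [pathP_nil, List.nil_append, vtx_mul_pathP, if_pos h.symm]
  | cons e p ih =>
    rw [pathP_cons, List.cons_append, pathP_cons, mul_assoc, ih hp.2]

lemma ghostP_append {q s : List G.E} {w u : G.V}
    (h : headSrc G q w = u) :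
    ghostP K G q w * ghostP K G s u = ghostP K G (s ++ q) w := by
  induction s with
  | nil =>
    rw [ghostP_nil, List.nil_append, ghostP_mul_vtx, if_pos h]
  | cons e s ih =>
    rw [ghostP_cons, List.cons_append, ghostP_cons, ← mul_assoc, ih]

lemma ghost_path_reduce (q : List G.E) (w : G.V) :
    ∀ (r : List G.E) (u : G.V), Comp G q w → Comp G r u →
    ghostP K G q w * pathP K G r u = 0
    ∨ (∃ r₂, Comp G r₂ u ∧ headSrc G r₂ u = w ∧
        ghostP K G q w * pathP K G r u = pathP K G r₂ u)
    ∨ (∃ q₂, Comp G q₂ w ∧ headSrc G q₂ w = u ∧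
        ghostP K G q w * pathP K G r u = ghostP K G q₂ w) := by
  induction q with
  | nil =>
    intro r u _ hr
    by_cases h : w = headSrc G r u
    · refine Or.inr (Or.inl ⟨r, hr, h.symm, ?_⟩)
      rw [ghostP_nil, vtx_mul_pathP, if_pos h]
    · refine Or.inl ?_
      rw [ghostP_nil, vtx_mul_pathP, if_neg h]
  | cons e q ih =>
    intro r u hq hr
    cases r with
    | nil =>
      by_cases h : G.src e = u
      · refine Or.inr (Or.inr ⟨e :: q, hq, (headSrc_cons G e q w).trans h, ?_⟩)
        rw [pathP_nil, ghostP_cons, mul_assoc, hGV, if_pos h]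
      · refine Or.inl ?_
        rw [pathP_nil, ghostP_cons, mul_assoc, hGV, if_neg h, mul_zero]
    | cons f r =>
      by_cases h : e = f
      · have hcond : G.tgt e = headSrc G r u := by
          rw [h]; exact hr.1
        have hprod : ghostP K G (e :: q) w * pathP K G (f :: r) u
            = ghostP K G q w * pathP K G r u := by
          rw [ghostP_cons, pathP_cons, mul_assoc, ← mul_assoc (lG K G e), hGE,
            if_pos h, vtx_mul_pathP, if_pos hcond]
        rw [hprod]
        exact ih r u hq.2 hr.2
      · refine Or.inl ?_
        rw [ghostP_cons, pathP_cons, mul_assoc, ← mul_assoc (lG K G e), hGE,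
          if_neg h, zero_mul, mul_zero]

/-- The set of monomials `p q*`. -/
def setD : Set (LPA K G) :=
  {x | ∃ p q w, Comp G p w ∧ Comp G q w ∧ x = pathP K G p w * ghostP K G q w}

lemma D_mul_D {x y : LPA K G} (hx : x ∈ setD K G) (hy : y ∈ setD K G) :
    x * y ∈ Submodule.span K (setD K G) := by
  obtain ⟨p, q, w, hp, hq, rfl⟩ := hx
  obtain ⟨r, s, u, hr, hs, rfl⟩ := hy
  have hassoc : pathP K G p w * ghostP K G q w * (pathP K G r u * ghostP K G s u)
      = pathP K G p w * (ghostP K G q w * pathP K G r u) * ghostP K G s u := by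
    rw [mul_assoc, mul_assoc, mul_assoc]
  rw [hassoc]
  rcases ghost_path_reduce K G q w r u hq hr with h0 | ⟨r₂, hr₂, hh, heq⟩ | ⟨q₂, hq₂, hh, heq⟩
  · rw [h0, mul_zero, zero_mul]
    exact Submodule.zero_mem _
  · rw [heq, pathP_append K G hp hh]
    exact Submodule.subset_span ⟨p ++ r₂, s, u, Comp_append G hp hr₂ hh, hs, rfl⟩
  · rw [heq, mul_assoc, ghostP_append K G hh]
    exact Submodule.subset_span ⟨p, s ++ q₂, w, hp, Comp_append G hs hq₂ hh, rfl⟩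

lemma vtx_mem_D (w : G.V) : lpaVtx K G w ∈ setD K G := by
  refine ⟨[], [], w, trivial, trivial, ?_⟩
  show lpaVtx K G w = lpaVtx K G w * lpaVtx K G w
  rw [hVV, if_pos rfl]

lemma lE_mem_D (e : G.E) : lE K G e ∈ setD K G := by
  refine ⟨[e], [], G.tgt e, ⟨rfl, trivial⟩, trivial, ?_⟩
  show lE K G e = (lE K G e * lpaVtx K G (G.tgt e)) * lpaVtx K G (G.tgt e)
  rw [hEV, if_pos rfl, hEV, if_pos rfl]

lemma lG_mem_D (e : G.E) : lG K G e ∈ setD K G := by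
  refine ⟨[], [e], G.tgt e, trivial, ⟨rfl, trivial⟩, ?_⟩
  show lG K G e = lpaVtx K G (G.tgt e) * (lpaVtx K G (G.tgt e) * lG K G e)
  rw [hVG, if_pos rfl, hVG, if_pos rfl]

/-- The span of the monomials together with `1` is everything. -/
lemma span_D_top (x : LPA K G) :
    x ∈ Submodule.span K (insert (1 : LPA K G) (setD K G)) := by
  have hmulcl : ∀ a b : LPA K G,
      a ∈ Submodule.span K (insert (1 : LPA K G) (setD K G)) →
      b ∈ Submodule.span K (insert (1 : LPA K G) (setD K G)) →
      a * b ∈ Submodule.span K (insert (1 : LPA K G) (setD K G)) := by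
    intro a b ha hb
    refine Submodule.span_induction₂ (p := fun a b _ _ => a * b ∈
      Submodule.span K (insert (1 : LPA K G) (setD K G))) ?_ ?_ ?_ ?_ ?_ ?_ ?_ ha hb
    · rintro a b (rfl | ha) (rfl | hb)
      · rw [one_mul]; exact Submodule.subset_span (Set.mem_insert _ _)
      · rw [one_mul]; exact Submodule.subset_span (Set.mem_insert_of_mem _ hb)
      · rw [mul_one]; exact Submodule.subset_span (Set.mem_insert_of_mem _ ha)
      · exact Submodule.span_mono (Set.subset_insert _ _) (D_mul_D K G ha hb)
    · intro b _; rw [zero_mul]; exact Submodule.zero_mem _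
    · intro a _; rw [mul_zero]; exact Submodule.zero_mem _
    · intro a b c _ _ _ h1 h2; rw [add_mul]; exact Submodule.add_mem _ h1 h2
    · intro a b c _ _ _ h1 h2; rw [mul_add]; exact Submodule.add_mem _ h1 h2
    · intro k a b _ _ h1; rw [smul_mul_assoc]; exact Submodule.smul_mem _ _ h1
    · intro k a b _ _ h1; rw [mul_smul_comm]; exact Submodule.smul_mem _ _ h1
  obtain ⟨y, rfl⟩ := RingQuot.mkAlgHom_surjective K (LPARel K G) x
  induction y using FreeAlgebra.induction with
  | grade0 k =>
    rw [AlgHom.commutes, Algebra.algebraMap_eq_smul_one]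
    exact Submodule.smul_mem _ _ (Submodule.subset_span (Set.mem_insert _ _))
  | grade1 g =>
    have hcoe : ∀ z : FreeAlgebra K (LPAGen G),
        RingQuot.mkAlgHom K (LPARel K G) z = RingQuot.mkRingHom (LPARel K G) z := by
      intro z
      rw [← RingQuot.mkAlgHom_coe K (LPARel K G)]
      rfl
    cases g with
    | vertex w =>
      rw [hcoe]
      exact Submodule.subset_span (Set.mem_insert_of_mem _ (vtx_mem_D K G w))
    | edge e =>
      rw [hcoe]
      exact Submodule.subset_span (Set.mem_insert_of_mem _ (lE_mem_D K G e))
    | ghost e =>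
      rw [hcoe]
      exact Submodule.subset_span (Set.mem_insert_of_mem _ (lG_mem_D K G e))
  | mul a b ha hb => rw [map_mul]; exact hmulcl _ _ ha hb
  | add a b ha hb => rw [map_add]; exact Submodule.add_mem _ ha hb

end Span


section Forced

variable (v : G.V) (c : List G.E) (hc : G.IsCycle c)

lemma forced_path
    (hnoexit : ∀ e f : G.E, G.src e = G.src f → G.src e ∈ c.map G.src → e = f)
    (p : List G.E) :
    ∀ (w : G.V) (a : ℕ), Comp G p w → headSrc G p w = pos G c hc a →
    pathP K G p w = seg K G c hc a p.length ∧ w = pos G c hc (a + p.length) := by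
  induction p with
  | nil =>
    intro w a _ hhead
    rw [headSrc_nil] at hhead
    refine ⟨?_, ?_⟩
    · rw [pathP_nil, hhead, List.length_nil, seg_zero]
    · rw [List.length_nil, Nat.add_zero]; exact hhead
  | cons e p ih =>
    intro w a hcomp hhead
    rw [headSrc_cons] at hhead
    have he : e = Ed G c hc a := Ed_unique G c hc hnoexit a e hhead
    have htail : headSrc G p w = pos G c hc (a + 1) := by
      rw [← hcomp.1, he, tgt_Ed]
    obtain ⟨h1, h2⟩ := ih w (a + 1) hcomp.2 htail
    refine ⟨?_, ?_⟩
    · rw [pathP_cons, h1, he, List.length_cons, seg_succ]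
    · rw [h2, List.length_cons]
      congr 1
      omega

lemma forced_ghost
    (hnoexit : ∀ e f : G.E, G.src e = G.src f → G.src e ∈ c.map G.src → e = f)
    (q : List G.E) :
    ∀ (w : G.V) (a : ℕ), Comp G q w → headSrc G q w = pos G c hc a →
    ghostP K G q w = gseg K G c hc a q.length ∧ w = pos G c hc (a + q.length) := by
  induction q with
  | nil =>
    intro w a _ hhead
    rw [headSrc_nil] at hhead
    refine ⟨?_, ?_⟩
    · rw [ghostP_nil, hhead, List.length_nil, gseg_zero]
    · rw [List.length_nil, Nat.add_zero]; exact hhead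
  | cons e q ih =>
    intro w a hcomp hhead
    rw [headSrc_cons] at hhead
    have he : e = Ed G c hc a := Ed_unique G c hc hnoexit a e hhead
    have htail : headSrc G q w = pos G c hc (a + 1) := by
      rw [← hcomp.1, he, tgt_Ed]
    obtain ⟨h1, h2⟩ := ih w (a + 1) hcomp.2 htail
    refine ⟨?_, ?_⟩
    · rw [ghostP_cons, h1, he, List.length_cons, gseg_succ]
    · rw [h2, List.length_cons]
      congr 1
      omega

lemma seg_gseg_Zel
    (hnoexit : ∀ e f : G.E, G.src e = G.src f → G.src e ∈ c.map G.src → e = f)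
    (k l : ℕ) (hkl : k % c.length = l % c.length) :
    ∃ m : ℤ, seg K G c hc 0 k * gseg K G c hc 0 l = Zel K G c hc m := by
  have hn : 0 < c.length := List.length_pos_iff.mpr hc.1
  by_cases hle : l ≤ k
  · obtain ⟨d, rfl⟩ : ∃ d, k = l + d := ⟨k - l, by omega⟩
    have hd : c.length ∣ d := by
      have := (Nat.modEq_iff_dvd' hle).mp hkl.symm
      simpa using this
    refine ⟨((d / c.length : ℕ) : ℤ), ?_⟩
    rw [Zel_nonneg K G c hc (Int.natCast_nonneg _), Int.toNat_natCast,
      Nat.div_mul_cancel hd]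
    exact seg_mul_gseg_ge K G c hc hnoexit hd 0 l
  · obtain ⟨d, rfl⟩ : ∃ d, l = k + d := ⟨l - k, by omega⟩
    have hd : c.length ∣ d := by
      have := (Nat.modEq_iff_dvd' (Nat.le_add_right k d)).mp hkl
      simpa using this
    have hdpos : 0 < d := by omega
    have hdiv : 0 < d / c.length := Nat.div_pos (Nat.le_of_dvd hdpos hd) hn
    refine ⟨-((d / c.length : ℕ) : ℤ), ?_⟩
    have hneg : ¬ (0:ℤ) ≤ -((d / c.length : ℕ) : ℤ) := by
      have : (0:ℤ) < ((d / c.length : ℕ) : ℤ) := by exact_mod_cast hdiv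
      omega
    rw [Zel_neg K G c hc hneg, neg_neg, Int.toNat_natCast, Nat.div_mul_cancel hd]
    exact seg_mul_gseg_le K G c hc hnoexit hd 0 k

lemma corner_subset_spanZ (hbase : c.head?.map G.src = some v)
    (hnoexit : ∀ e f : G.E, G.src e = G.src f → G.src e ∈ c.map G.src → e = f)
    (x : LPA K G) :
    lpaVtx K G v * x * lpaVtx K G v
      ∈ Submodule.span K (Set.range (Zel K G c hc)) := by
  have hx := span_D_top K G x
  refine Submodule.span_induction
    (p := fun y _ => lpaVtx K G v * y * lpaVtx K G v
      ∈ Submodule.span K (Set.range (Zel K G c hc))) ?_ ?_ ?_ ?_ hx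
  · rintro y (rfl | ⟨p, q, w, hp, hq, rfl⟩)
    · rw [mul_one, hVV, if_pos rfl]
      have hz : lpaVtx K G v = Zel K G c hc 0 := by
        rw [Zel_zero, pos_zero G v c hc hbase]
      rw [hz]
      exact Submodule.subset_span ⟨0, rfl⟩
    · have hassoc : lpaVtx K G v * (pathP K G p w * ghostP K G q w) * lpaVtx K G v
          = (lpaVtx K G v * pathP K G p w) * (ghostP K G q w * lpaVtx K G v) := by
        rw [← mul_assoc, mul_assoc (lpaVtx K G v * pathP K G p w)]
      rw [hassoc, vtx_mul_pathP, ghostP_mul_vtx]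
      by_cases h1 : v = headSrc G p w
      · by_cases h2 : headSrc G q w = v
        · rw [if_pos h1, if_pos h2]
          have hp0 : headSrc G p w = pos G c hc 0 := by
            rw [← h1, pos_zero G v c hc hbase]
          have hq0 : headSrc G q w = pos G c hc 0 := by
            rw [h2, pos_zero G v c hc hbase]
          obtain ⟨hP, hw1⟩ := forced_path K G c hc hnoexit p w 0 hp hp0
          obtain ⟨hQ, hw2⟩ := forced_ghost K G c hc hnoexit q w 0 hq hq0
          rw [hP, hQ]
          have hmod : p.length % c.length = q.length % c.length := by
            have := pos_inj G c hc (hw1.symm.trans hw2)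
            simpa using this
          obtain ⟨m, hm⟩ := seg_gseg_Zel K G c hc hnoexit p.length q.length hmod
          rw [hm]
          exact Submodule.subset_span ⟨m, rfl⟩
        · rw [if_neg h2, mul_zero]; exact Submodule.zero_mem _
      · rw [if_neg h1, zero_mul]; exact Submodule.zero_mem _
  · show lpaVtx K G v * 0 * lpaVtx K G v ∈ _
    rw [mul_zero, zero_mul]; exact Submodule.zero_mem _
  · intro a b _ _ ha hb
    show lpaVtx K G v * (a + b) * lpaVtx K G v ∈ _
    rw [mul_add, add_mul]
    exact Submodule.add_mem _ ha hb
  · intro k a _ ha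
    show lpaVtx K G v * (k • a) * lpaVtx K G v ∈ _
    rw [mul_smul_comm, smul_mul_assoc]
    exact Submodule.smul_mem _ _ ha

end Forced


section Grading

/-- The grading representation: sends a generator of degree `d` to `single d (itself)`. -/
noncomputable def gradGen : LPAGen G → AddMonoidAlgebra (LPA K G) ℤ
  | LPAGen.vertex w => AddMonoidAlgebra.single (0 : ℤ) (lpaVtx K G w)
  | LPAGen.edge e => AddMonoidAlgebra.single (1 : ℤ) (lE K G e)
  | LPAGen.ghost e => AddMonoidAlgebra.single (-1 : ℤ) (lG K G e)

lemma grad_respects :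
    ∀ ⦃x y : FreeAlgebra K (LPAGen G)⦄, LPARel K G x y →
      (FreeAlgebra.lift K (gradGen K G)) x = (FreeAlgebra.lift K (gradGen K G)) y := by
  intro x y h
  induction h with
  | vtx u w =>
    by_cases h : u = w
    · rw [if_pos h]
      simp only [map_mul, FreeAlgebra.lift_ι_apply, gradGen,
        AddMonoidAlgebra.single_mul_single]
      rw [hVV, if_pos h]
      norm_num
    · rw [if_neg h, map_zero]
      simp only [map_mul, FreeAlgebra.lift_ι_apply, gradGen,
        AddMonoidAlgebra.single_mul_single]
      rw [hVV, if_neg h]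
      simp
  | src_edge e =>
    simp only [map_mul, FreeAlgebra.lift_ι_apply, gradGen,
      AddMonoidAlgebra.single_mul_single]
    rw [hVE, if_pos rfl, zero_add]
  | edge_tgt e =>
    simp only [map_mul, FreeAlgebra.lift_ι_apply, gradGen,
      AddMonoidAlgebra.single_mul_single]
    rw [hEV, if_pos rfl, add_zero]
  | tgt_ghost e =>
    simp only [map_mul, FreeAlgebra.lift_ι_apply, gradGen,
      AddMonoidAlgebra.single_mul_single]
    rw [hVG, if_pos rfl, zero_add]
  | ghost_src e =>
    simp only [map_mul, FreeAlgebra.lift_ι_apply, gradGen,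
      AddMonoidAlgebra.single_mul_single]
    rw [hGV, if_pos rfl, add_zero]
  | ck1 e f =>
    by_cases h : e = f
    · rw [if_pos h]
      simp only [map_mul, FreeAlgebra.lift_ι_apply, gradGen,
        AddMonoidAlgebra.single_mul_single]
      rw [hGE, if_pos h, neg_add_cancel]
    · rw [if_neg h, map_zero]
      simp only [map_mul, FreeAlgebra.lift_ι_apply, gradGen,
        AddMonoidAlgebra.single_mul_single]
      rw [hGE, if_neg h]
      simp
  | ck2 w hfin hne =>
    rw [FreeAlgebra.lift_ι_apply, map_sum]
    have hterm : ∀ e ∈ hfin.toFinset,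
        (FreeAlgebra.lift K (gradGen K G))
          (FreeAlgebra.ι K (LPAGen.edge e) * FreeAlgebra.ι K (LPAGen.ghost e))
        = AddMonoidAlgebra.single (0:ℤ) (lE K G e * lG K G e) := by
      intro e _
      simp only [map_mul, FreeAlgebra.lift_ι_apply, gradGen,
        AddMonoidAlgebra.single_mul_single]
      rw [add_neg_cancel]
    rw [Finset.sum_congr rfl hterm, show (∑ x ∈ hfin.toFinset, AddMonoidAlgebra.single (0:ℤ) (lE K G x * lG K G x)) = AddMonoidAlgebra.single 0 (∑ x ∈ hfin.toFinset, lE K G x * lG K G x) from (map_sum (AddMonoidAlgebra.singleAddHom (0:ℤ)) _ _).symm]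
    show AddMonoidAlgebra.single (0:ℤ) (lpaVtx K G w) = _
    congr 1
    have hrel := RingQuot.mkRingHom_rel (LPARel.ck2 (K := K) (G := G) w hfin hne)
    rw [map_sum] at hrel
    rw [lpaVtx, hrel]
    refine Finset.sum_congr rfl fun e _ => ?_
    rw [map_mul]
    rfl

/-- The grading homomorphism on the Leavitt path algebra. -/
noncomputable def grad : LPA K G →ₐ[K] AddMonoidAlgebra (LPA K G) ℤ :=
  RingQuot.liftAlgHom K ⟨FreeAlgebra.lift K (gradGen K G), grad_respects K G⟩

lemma grad_mk (z : FreeAlgebra K (LPAGen G)) :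
    grad K G (RingQuot.mkRingHom (LPARel K G) z)
      = (FreeAlgebra.lift K (gradGen K G)) z := by
  have hcoe : RingQuot.mkRingHom (LPARel K G) z
      = RingQuot.mkAlgHom K (LPARel K G) z := by
    rw [← RingQuot.mkAlgHom_coe K (LPARel K G)]; rfl
  rw [hcoe, grad, RingQuot.liftAlgHom_mkAlgHom_apply]

lemma grad_vtx (w : G.V) :
    grad K G (lpaVtx K G w) = AddMonoidAlgebra.single (0:ℤ) (lpaVtx K G w) := by
  rw [lpaVtx, grad_mk, FreeAlgebra.lift_ι_apply]; rfl

lemma grad_lE (e : G.E) :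
    grad K G (lE K G e) = AddMonoidAlgebra.single (1:ℤ) (lE K G e) := by
  rw [lE, grad_mk, FreeAlgebra.lift_ι_apply]; rfl

lemma grad_lG (e : G.E) :
    grad K G (lG K G e) = AddMonoidAlgebra.single (-1:ℤ) (lG K G e) := by
  rw [lG, grad_mk, FreeAlgebra.lift_ι_apply]; rfl

variable (c : List G.E) (hc : G.IsCycle c)

lemma grad_seg (a k : ℕ) :
    grad K G (seg K G c hc a k)
      = AddMonoidAlgebra.single (k : ℤ) (seg K G c hc a k) := by
  induction k generalizing a with
  | zero => rw [seg_zero, grad_vtx, Nat.cast_zero]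
  | succ k ih =>
    rw [seg_succ, map_mul, grad_lE, ih (a+1), AddMonoidAlgebra.single_mul_single,
      ← seg_succ]
    congr 1
    push_cast
    ring

lemma grad_gseg (a k : ℕ) :
    grad K G (gseg K G c hc a k)
      = AddMonoidAlgebra.single (-(k : ℤ)) (gseg K G c hc a k) := by
  induction k generalizing a with
  | zero => rw [gseg_zero, grad_vtx, Nat.cast_zero, neg_zero]
  | succ k ih =>
    rw [gseg_succ, map_mul, grad_lG, ih (a+1), AddMonoidAlgebra.single_mul_single,
      ← gseg_succ]
    congr 1
    push_cast
    ring

lemma grad_Zel (m : ℤ) :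
    grad K G (Zel K G c hc m)
      = AddMonoidAlgebra.single (m * (c.length : ℤ)) (Zel K G c hc m) := by
  by_cases h : 0 ≤ m
  · rw [Zel_nonneg K G c hc h, grad_seg]
    congr 1
    push_cast
    rw [Int.toNat_of_nonneg h]
  · rw [Zel_neg K G c hc h, grad_gseg]
    congr 1
    have h2 : (((-m).toNat : ℤ)) = -m := Int.toNat_of_nonneg (by omega)
    push_cast
    rw [h2]
    ring

end Grading


section Chen

variable (c : List G.E) (hc : G.IsCycle c)

/-- The basis of the Chen module: infinite paths tail-equivalent to the canonical one. -/
def ChenB : Type :=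
  {p : ℕ → G.E // G.IsInfPath p ∧ ∃ m t : ℕ, ∀ k, p (m + k) = Ed G c hc (t + k)}

/-- The Chen module. -/
abbrev ChenM := ChenB G c hc →₀ K

/-- Prepending an edge to an infinite path. -/
def consB (e : G.E) (b : ChenB G c hc) (h : G.tgt e = G.src (b.1 0)) : ChenB G c hc :=
  ⟨fun k => match k with | 0 => e | k+1 => b.1 k, by
    refine ⟨fun k => ?_, ?_⟩
    · match k with
      | 0 => exact h
      | k+1 => exact b.2.1 k
    · obtain ⟨m, t, hmt⟩ := b.2.2
      refine ⟨m + 1, t, fun k => ?_⟩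
      have h1 : m + 1 + k = (m + k) + 1 := by omega
      rw [h1]
      exact hmt k⟩

/-- Dropping the first edge of an infinite path. -/
def tailB (b : ChenB G c hc) : ChenB G c hc :=
  ⟨fun k => b.1 (k + 1), by
    refine ⟨fun k => b.2.1 (k + 1), ?_⟩
    obtain ⟨m, t, hmt⟩ := b.2.2
    refine ⟨m, t + 1, fun k => ?_⟩
    show b.1 ((m + k) + 1) = Ed G c hc (t + 1 + k)
    have h1 : (m + k) + 1 = m + (k + 1) := by omega
    have h2 : t + 1 + k = t + (k + 1) := by omega
    rw [h1, h2]
    exact hmt (k + 1)⟩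

lemma consB_tailB (b : ChenB G c hc) (h : G.tgt (b.1 0) = G.src ((tailB G c hc b).1 0)) :
    consB G c hc (b.1 0) (tailB G c hc b) h = b := by
  apply Subtype.ext
  funext k
  match k with
  | 0 => rfl
  | k+1 => rfl

lemma tailB_consB (e : G.E) (b : ChenB G c hc) (h : G.tgt e = G.src (b.1 0)) :
    tailB G c hc (consB G c hc e b h) = b := by
  apply Subtype.ext
  funext k
  rfl

noncomputable def actV (w : G.V) (b : ChenB G c hc) : ChenM K G c hc :=
  if G.src (b.1 0) = w then Finsupp.single b 1 else 0

noncomputable def actE (e : G.E) (b : ChenB G c hc) : ChenM K G c hc :=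
  if h : G.tgt e = G.src (b.1 0) then Finsupp.single (consB G c hc e b h) 1 else 0

noncomputable def actG (e : G.E) (b : ChenB G c hc) : ChenM K G c hc :=
  if b.1 0 = e then Finsupp.single (tailB G c hc b) 1 else 0

noncomputable def endOf : LPAGen G → Module.End K (ChenM K G c hc)
  | LPAGen.vertex w => Finsupp.lift (ChenM K G c hc) K (ChenB G c hc) (actV K G c hc w)
  | LPAGen.edge e => Finsupp.lift (ChenM K G c hc) K (ChenB G c hc) (actE K G c hc e)
  | LPAGen.ghost e => Finsupp.lift (ChenM K G c hc) K (ChenB G c hc) (actG K G c hc e)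

lemma liftEval (f : ChenB G c hc → ChenM K G c hc) (b : ChenB G c hc) :
    (Finsupp.lift (ChenM K G c hc) K (ChenB G c hc) f) (Finsupp.single b 1) = f b := by
  rw [Finsupp.lift_apply, Finsupp.sum_single_index (by rw [zero_smul]), one_smul]

lemma endEq (S T : Module.End K (ChenM K G c hc))
    (h : ∀ b, S (Finsupp.single b 1) = T (Finsupp.single b 1)) : S = T := by
  refine Finsupp.lhom_ext fun b k => ?_
  have hk : (Finsupp.single b k : ChenM K G c hc) = k • Finsupp.single b 1 := by
    rw [Finsupp.smul_single, smul_eq_mul, mul_one]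
  rw [hk, map_smul, map_smul, h]

lemma consB_zero (e : G.E) (b : ChenB G c hc) (h : G.tgt e = G.src (b.1 0)) :
    (consB G c hc e b h).1 0 = e := rfl

lemma tailB_apply (b : ChenB G c hc) (k : ℕ) :
    (tailB G c hc b).1 k = b.1 (k + 1) := rfl

lemma chen_respects :
    ∀ ⦃x y : FreeAlgebra K (LPAGen G)⦄, LPARel K G x y →
      (FreeAlgebra.lift K (endOf K G c hc)) x = (FreeAlgebra.lift K (endOf K G c hc)) y := by
  intro x y h
  induction h with
  | vtx u w =>
    by_cases huw : u = w
    · rw [if_pos huw]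
      subst huw
      simp only [map_mul, FreeAlgebra.lift_ι_apply]
      refine endEq K G c hc _ _ fun b => ?_
      rw [Module.End.mul_apply]
      simp only [endOf, liftEval, actV]
      by_cases h1 : G.src (b.1 0) = u
      · rw [if_pos h1, liftEval, actV, if_pos h1]
      · rw [if_neg h1, map_zero]
    · rw [if_neg huw, map_zero]
      simp only [map_mul, FreeAlgebra.lift_ι_apply]
      refine endEq K G c hc _ _ fun b => ?_
      rw [Module.End.mul_apply, LinearMap.zero_apply]
      simp only [endOf, liftEval, actV]
      by_cases h1 : G.src (b.1 0) = w
      · rw [if_pos h1, liftEval, actV, if_neg (fun hx => huw (hx.symm.trans h1))]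
      · rw [if_neg h1, map_zero]
  | src_edge e =>
    simp only [map_mul, FreeAlgebra.lift_ι_apply]
    refine endEq K G c hc _ _ fun b => ?_
    rw [Module.End.mul_apply]
    simp only [endOf, liftEval, actE]
    by_cases h1 : G.tgt e = G.src (b.1 0)
    · rw [dif_pos h1, liftEval, actV,
        if_pos (show G.src ((consB G c hc e b h1).1 0) = G.src e from rfl)]
    · rw [dif_neg h1, map_zero]
  | edge_tgt e =>
    simp only [map_mul, FreeAlgebra.lift_ι_apply]
    refine endEq K G c hc _ _ fun b => ?_
    rw [Module.End.mul_apply]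
    simp only [endOf, liftEval, actV]
    by_cases h1 : G.src (b.1 0) = G.tgt e
    · rw [if_pos h1, liftEval]
    · rw [if_neg h1, map_zero, actE, dif_neg (fun hx => h1 hx.symm)]
  | tgt_ghost e =>
    simp only [map_mul, FreeAlgebra.lift_ι_apply]
    refine endEq K G c hc _ _ fun b => ?_
    rw [Module.End.mul_apply]
    simp only [endOf, liftEval, actG]
    by_cases h1 : b.1 0 = e
    · have hsrc : G.src ((tailB G c hc b).1 0) = G.tgt e := by
        rw [tailB_apply, ← h1]
        exact (b.2.1 0).symm
      rw [if_pos h1, liftEval, actV, if_pos hsrc]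
    · rw [if_neg h1, map_zero]
  | ghost_src e =>
    simp only [map_mul, FreeAlgebra.lift_ι_apply]
    refine endEq K G c hc _ _ fun b => ?_
    rw [Module.End.mul_apply]
    simp only [endOf, liftEval, actV]
    by_cases h1 : G.src (b.1 0) = G.src e
    · rw [if_pos h1, liftEval]
    · rw [if_neg h1, map_zero, actG, if_neg (fun hx => h1 (by rw [hx]))]
  | ck1 e f =>
    by_cases hef : e = f
    · rw [if_pos hef]
      subst hef
      simp only [map_mul, FreeAlgebra.lift_ι_apply]
      refine endEq K G c hc _ _ fun b => ?_
      rw [Module.End.mul_apply]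
      simp only [endOf, liftEval, actE, actV]
      by_cases h1 : G.tgt e = G.src (b.1 0)
      · rw [dif_pos h1, liftEval, actG,
          if_pos (show (consB G c hc e b h1).1 0 = e from rfl), tailB_consB,
          if_pos h1.symm]
      · rw [dif_neg h1, map_zero, if_neg (fun hx => h1 hx.symm)]
    · rw [if_neg hef, map_zero]
      simp only [map_mul, FreeAlgebra.lift_ι_apply]
      refine endEq K G c hc _ _ fun b => ?_
      rw [Module.End.mul_apply, LinearMap.zero_apply]
      simp only [endOf, liftEval, actE]
      by_cases h1 : G.tgt f = G.src (b.1 0)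
      · rw [dif_pos h1, liftEval, actG,
          if_neg (fun hx => hef (((consB_zero G c hc f b h1).symm.trans hx).symm))]
      · rw [dif_neg h1, map_zero]
  | ck2 w hfin hne =>
    rw [FreeAlgebra.lift_ι_apply, map_sum]
    refine endEq K G c hc _ _ fun b => ?_
    rw [LinearMap.sum_apply]
    have hterm : ∀ e ∈ hfin.toFinset,
        ((FreeAlgebra.lift K (endOf K G c hc))
          (FreeAlgebra.ι K (LPAGen.edge e) * FreeAlgebra.ι K (LPAGen.ghost e)))
          (Finsupp.single b 1)
        = if b.1 0 = e then Finsupp.single b 1 else 0 := by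
      intro e _
      simp only [map_mul, FreeAlgebra.lift_ι_apply, Module.End.mul_apply]
      simp only [endOf, liftEval, actG]
      by_cases h1 : b.1 0 = e
      · subst h1
        rw [if_pos rfl, liftEval, actE,
          dif_pos (show G.tgt (b.1 0) = G.src ((tailB G c hc b).1 0) from b.2.1 0),
          consB_tailB, if_pos rfl]
      · rw [if_neg h1, map_zero, if_neg h1]
    rw [Finset.sum_congr rfl hterm, Finset.sum_ite_eq]
    simp only [endOf, liftEval, actV]
    have hmem : (b.1 0 ∈ hfin.toFinset) ↔ G.src (b.1 0) = w := by
      rw [Set.Finite.mem_toFinset]; exact Iff.rfl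
    by_cases h : G.src (b.1 0) = w
    · rw [if_pos h, if_pos (hmem.mpr h)]
    · rw [if_neg h, if_neg (fun hx => h (hmem.mp hx))]

/-- The Chen representation of the Leavitt path algebra. -/
noncomputable def chenRep : LPA K G →ₐ[K] Module.End K (ChenM K G c hc) :=
  RingQuot.liftAlgHom K ⟨FreeAlgebra.lift K (endOf K G c hc), chen_respects K G c hc⟩

lemma chenRep_mk (z : FreeAlgebra K (LPAGen G)) :
    chenRep K G c hc (RingQuot.mkRingHom (LPARel K G) z)
      = (FreeAlgebra.lift K (endOf K G c hc)) z := by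
  have hcoe : RingQuot.mkRingHom (LPARel K G) z
      = RingQuot.mkAlgHom K (LPARel K G) z := by
    rw [← RingQuot.mkAlgHom_coe K (LPARel K G)]; rfl
  rw [hcoe, chenRep, RingQuot.liftAlgHom_mkAlgHom_apply]

/-- The canonical rational infinite path, starting at index `t`. -/
def canB (t : ℕ) : ChenB G c hc :=
  ⟨fun k => Ed G c hc (t + k), by
    refine ⟨fun k => ?_, 0, t, fun k => by rw [Nat.zero_add]⟩
    show G.tgt (Ed G c hc (t + k)) = G.src (Ed G c hc (t + (k + 1)))
    rw [tgt_Ed]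
    show pos G c hc (t + k + 1) = pos G c hc (t + (k + 1))
    congr 1⟩

lemma chen_vtx_canB (w : G.V) (t : ℕ) :
    chenRep K G c hc (lpaVtx K G w) (Finsupp.single (canB G c hc t) 1)
      = if pos G c hc t = w then Finsupp.single (canB G c hc t) 1 else 0 := by
  rw [lpaVtx, chenRep_mk, FreeAlgebra.lift_ι_apply]
  simp only [endOf, liftEval, actV]
  have hsrc : G.src ((canB G c hc t).1 0) = pos G c hc t := by
    show G.src (Ed G c hc (t + 0)) = pos G c hc t
    rw [Nat.add_zero]; rfl
  rw [hsrc]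

lemma tailB_canB (t : ℕ) : tailB G c hc (canB G c hc t) = canB G c hc (t + 1) := by
  apply Subtype.ext
  funext k
  show Ed G c hc (t + (k + 1)) = Ed G c hc (t + 1 + k)
  congr 1
  omega

lemma consB_canB (t : ℕ) (h : G.tgt (Ed G c hc t) = G.src ((canB G c hc (t+1)).1 0)) :
    consB G c hc (Ed G c hc t) (canB G c hc (t + 1)) h = canB G c hc t := by
  apply Subtype.ext
  funext k
  match k with
  | 0 => show Ed G c hc t = Ed G c hc (t + 0); rw [Nat.add_zero]
  | k+1 => show Ed G c hc (t + 1 + k) = Ed G c hc (t + (k + 1)); congr 1; omega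

lemma chen_seg_canB (a j : ℕ) :
    chenRep K G c hc (seg K G c hc a j) (Finsupp.single (canB G c hc (a + j)) 1)
      = Finsupp.single (canB G c hc a) 1 := by
  induction j generalizing a with
  | zero =>
    rw [Nat.add_zero, seg_zero, chen_vtx_canB, if_pos rfl]
  | succ j ih =>
    rw [seg_succ, map_mul, Module.End.mul_apply]
    have h1 : a + (j + 1) = (a + 1) + j := by omega
    rw [h1, ih (a + 1)]
    rw [lE, chenRep_mk, FreeAlgebra.lift_ι_apply]
    simp only [endOf, liftEval, actE]
    have hcond : G.tgt (Ed G c hc a) = G.src ((canB G c hc (a+1)).1 0) := by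
      show _ = G.src (Ed G c hc (a + 1 + 0))
      rw [Nat.add_zero, tgt_Ed]; rfl
    rw [dif_pos hcond, consB_canB]

lemma chen_gseg_canB (a j : ℕ) :
    chenRep K G c hc (gseg K G c hc a j) (Finsupp.single (canB G c hc a) 1)
      = Finsupp.single (canB G c hc (a + j)) 1 := by
  induction j generalizing a with
  | zero => rw [Nat.add_zero, gseg_zero, chen_vtx_canB, if_pos rfl]
  | succ j ih =>
    rw [gseg_succ, map_mul, Module.End.mul_apply]
    rw [lG, chenRep_mk, FreeAlgebra.lift_ι_apply]
    simp only [endOf, liftEval, actG]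
    have hcond : (canB G c hc a).1 0 = Ed G c hc a := by
      show Ed G c hc (a + 0) = Ed G c hc a
      rw [Nat.add_zero]
    rw [if_pos hcond, tailB_canB, ih (a + 1)]
    congr 1
    apply Subtype.ext
    funext k
    show Ed G c hc (a + 1 + j + k) = Ed G c hc (a + (j + 1) + k)
    congr 1
    omega

lemma canB_shift {d : ℕ} (hd : c.length ∣ d) : canB G c hc d = canB G c hc 0 := by
  apply Subtype.ext
  funext k
  show Ed G c hc (d + k) = Ed G c hc (0 + k)
  rw [Nat.zero_add, Nat.add_comm d k, Ed_shift G c hc hd]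

lemma Zel_ne_zero (m : ℤ) : Zel K G c hc m ≠ 0 := by
  intro h0
  have happ : chenRep K G c hc (Zel K G c hc m) (Finsupp.single (canB G c hc 0) 1)
      = Finsupp.single (canB G c hc 0) 1 := by
    by_cases h : 0 ≤ m
    · rw [Zel_nonneg K G c hc h]
      have := chen_seg_canB K G c hc 0 (m.toNat * c.length)
      rwa [Nat.zero_add, canB_shift G c hc (dvd_mul_left _ _)] at this
    · rw [Zel_neg K G c hc h]
      have := chen_gseg_canB K G c hc 0 ((-m).toNat * c.length)
      rwa [Nat.zero_add, canB_shift G c hc (dvd_mul_left _ _)] at this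
  rw [h0, map_zero, LinearMap.zero_apply] at happ
  exact (one_ne_zero (α := K)) (Finsupp.single_eq_zero.mp happ.symm)

end Chen


section Indep

variable (c : List G.E) (hc : G.IsCycle c)

lemma Zel_indep {p : ℤ →₀ K}
    (h : (p.sum fun m k => k • Zel K G c hc m) = (0 : LPA K G)) : p = 0 := by
  have hn : 0 < c.length := List.length_pos_iff.mpr hc.1
  have hGrad := congrArg (grad K G) h
  rw [map_zero, Finsupp.sum, map_sum] at hGrad
  simp only [map_smul, grad_Zel] at hGrad
  refine Finsupp.ext fun m₀ => ?_
  show p m₀ = 0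
  by_cases hm : m₀ ∈ p.support
  · have hcoeff := congrArg (fun q => q.coeff (m₀ * (c.length : ℤ))) hGrad
    simp only [AddMonoidAlgebra.coeff_zero, Finsupp.coe_zero, Pi.zero_apply] at hcoeff
    rw [AddMonoidAlgebra.coeff_sum, Finsupp.finset_sum_apply] at hcoeff
    have hterm : ∀ m ∈ p.support,
        (p m • AddMonoidAlgebra.single (m * (c.length : ℤ)) (Zel K G c hc m)).coeff
          (m₀ * (c.length : ℤ))
        = if m = m₀ then p m • Zel K G c hc m else 0 := by
      intro m _
      rw [AddMonoidAlgebra.coeff_smul_apply, AddMonoidAlgebra.coeff_single, Finsupp.single_apply]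
      by_cases hmm : m = m₀
      · rw [if_pos hmm, if_pos (by rw [hmm])]
      · rw [if_neg hmm, if_neg (fun hx => hmm (by
          have := mul_right_cancel₀ (b := (c.length : ℤ)) (by exact_mod_cast hn.ne') hx
          exact this)), smul_zero]
    rw [Finset.sum_congr rfl hterm, Finset.sum_ite_eq'] at hcoeff
    rw [if_pos hm] at hcoeff
    by_contra hne
    apply Zel_ne_zero K G c hc m₀
    calc Zel K G c hc m₀ = (p m₀)⁻¹ • (p m₀ • Zel K G c hc m₀) := by
          rw [smul_smul, inv_mul_cancel₀ hne, one_smul]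
    _ = 0 := by rw [hcoeff, smul_zero]
  · exact Finsupp.notMem_support_iff.mp hm

end Indep

end Stmt14



set_option maxHeartbeats 4000000 in
set_option synthInstance.maxHeartbeats 1000000 in
/-- If `T_E(v)` is a single cycle `c` based at `v` without exits, then the
corner `v L_K(E) v` is isomorphic, as a `K`-algebra, to the Laurent polynomial ring
`K[x, x⁻¹]`. -/
theorem stmt14 (K : Type) [Field K] (G : DGraph) (v : G.V) (c : List G.E)
    (hc : G.IsCycle c) (hbase : c.head?.map G.src = some v)
    (htree : {w : G.V | G.Reaches v w} = {w : G.V | w ∈ c.map G.src})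
    (hnoexit : ∀ e f : G.E, G.src e = G.src f → G.src e ∈ c.map G.src → e = f) :
    ∃ e : lpaCorner K G v ≃+* LaurentPolynomial K,
      ∀ (k : K) (x : lpaCorner K G v), e (k • x) = k • e x := by
  classical
  have hvmem : lpaVtx K G v ∈ lpaCorner K G v := by
    show lpaVtx K G v * lpaVtx K G v * lpaVtx K G v = lpaVtx K G v
    rw [lpaVtx_idem, lpaVtx_idem]
  have hmemdef : ∀ x : ↥(lpaCorner K G v),
      lpaVtx K G v * (x : LPA K G) * lpaVtx K G v = (x : LPA K G) := fun x => x.2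
  letI : One ↥(lpaCorner K G v) := ⟨⟨lpaVtx K G v, hvmem⟩⟩
  have hone_mul : ∀ x : ↥(lpaCorner K G v), 1 * x = x := by
    intro x
    apply Subtype.ext
    show lpaVtx K G v * (x : LPA K G) = (x : LPA K G)
    calc lpaVtx K G v * (x : LPA K G)
        = lpaVtx K G v * (lpaVtx K G v * (x : LPA K G) * lpaVtx K G v) := by
          rw [hmemdef x]
      _ = lpaVtx K G v * lpaVtx K G v * (x : LPA K G) * lpaVtx K G v := by
          rw [← mul_assoc, ← mul_assoc]
      _ = lpaVtx K G v * (x : LPA K G) * lpaVtx K G v := by rw [lpaVtx_idem]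
      _ = (x : LPA K G) := hmemdef x
  have hmul_one : ∀ x : ↥(lpaCorner K G v), x * 1 = x := by
    intro x
    apply Subtype.ext
    show (x : LPA K G) * lpaVtx K G v = (x : LPA K G)
    calc (x : LPA K G) * lpaVtx K G v
        = lpaVtx K G v * (x : LPA K G) * lpaVtx K G v * lpaVtx K G v := by
          rw [hmemdef x]
      _ = lpaVtx K G v * (x : LPA K G) * (lpaVtx K G v * lpaVtx K G v) := by
          rw [mul_assoc]
      _ = lpaVtx K G v * (x : LPA K G) * lpaVtx K G v := by rw [lpaVtx_idem]
      _ = (x : LPA K G) := hmemdef x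
  letI : Ring ↥(lpaCorner K G v) :=
    { (inferInstance : NonUnitalRing ↥(lpaCorner K G v)) with
      one := (1 : ↥(lpaCorner K G v)),
      one_mul := hone_mul,
      mul_one := hmul_one }
  letI : Algebra K ↥(lpaCorner K G v) := Algebra.ofModule
    (fun k x y => Subtype.ext (smul_mul_assoc k (x : LPA K G) (y : LPA K G)))
    (fun k x y => Subtype.ext (mul_smul_comm k (x : LPA K G) (y : LPA K G)))
  set φ : Multiplicative ℤ →* ↥(lpaCorner K G v) :=
    { toFun := fun m => ⟨Stmt14.Zel K G c hc (Multiplicative.toAdd m),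
        Stmt14.Zel_memCorner K G c hc v hbase _⟩,
      map_one' := by
        apply Subtype.ext
        show Stmt14.Zel K G c hc (0 : ℤ) = lpaVtx K G v
        rw [Stmt14.Zel_zero, Stmt14.pos_zero G v c hc hbase],
      map_mul' := by
        intro a b
        apply Subtype.ext
        show Stmt14.Zel K G c hc _ = Stmt14.Zel K G c hc _ * Stmt14.Zel K G c hc _
        rw [Stmt14.Zel_mul K G c hc hnoexit]
        rfl } with hφ
  set F := (AddMonoidAlgebra.lift K ↥(lpaCorner K G v) ℤ) φ with hF
  have hFval : ∀ p : LaurentPolynomial K,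
      ((F p : ↥(lpaCorner K G v)) : LPA K G)
        = p.coeff.sum fun m k => k • Stmt14.Zel K G c hc m := by
    intro p
    rw [hF, AddMonoidAlgebra.lift_apply]
    rw [Finsupp.sum, Finsupp.sum, AddSubmonoidClass.coe_finset_sum]
    refine Finset.sum_congr rfl fun m _ => ?_
    rw [SetLike.val_smul]
    rfl
  have hFinj : Function.Injective F := by
    intro p q hpq
    have h0 : F (p - q) = 0 := by rw [map_sub, hpq, sub_self]
    have h1 : ((F (p - q) : ↥(lpaCorner K G v)) : LPA K G) = 0 := by
      rw [h0]; rfl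
    rw [hFval] at h1
    have h2 := Stmt14.Zel_indep K G c hc h1
    rwa [AddMonoidAlgebra.coeff_eq_zero, sub_eq_zero] at h2
  have hFsurj : Function.Surjective F := by
    intro x
    have hx : (x : LPA K G) ∈ Submodule.span K (Set.range (Stmt14.Zel K G c hc)) := by
      have h3 := Stmt14.corner_subset_spanZ K G v c hc hbase hnoexit (x : LPA K G)
      rwa [hmemdef x] at h3
    have hex : ∃ p : LaurentPolynomial K,
        ((F p : ↥(lpaCorner K G v)) : LPA K G) = (x : LPA K G) := by
      refine Submodule.span_induction
        (p := fun y _ => ∃ p : LaurentPolynomial K,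
          ((F p : ↥(lpaCorner K G v)) : LPA K G) = y) ?_ ?_ ?_ ?_ hx
      · rintro y ⟨m, rfl⟩
        refine ⟨AddMonoidAlgebra.single m 1, ?_⟩
        rw [hFval, AddMonoidAlgebra.coeff_single, Finsupp.sum_single_index (by rw [zero_smul]), one_smul]
      · exact ⟨0, by rw [map_zero]; rfl⟩
      · rintro y z _ _ ⟨py, hy⟩ ⟨pz, hz⟩
        refine ⟨py + pz, ?_⟩
        rw [map_add]
        show ((F py : ↥(lpaCorner K G v)) : LPA K G) + ((F pz : _) : LPA K G) = y + z
        rw [hy, hz]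
      · rintro k y _ ⟨py, hy⟩
        refine ⟨k • py, ?_⟩
        rw [map_smul]
        show k • ((F py : ↥(lpaCorner K G v)) : LPA K G) = k • y
        rw [hy]
    obtain ⟨p, hp⟩ := hex
    exact ⟨p, Subtype.ext hp⟩
  set e := (AlgEquiv.ofBijective F ⟨hFinj, hFsurj⟩).symm with he
  refine ⟨e.toRingEquiv, fun k x => ?_⟩
  exact map_smul e k x
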